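/- Let q be a positive definite quadratic form on ℝⁿ (n ≥ 2) which is at most Q-distorted for some Q ≥ 1, and let q₀ be the restriction of q to an arbitrary hyperplane H ⊂ ℝⁿ. Then |q| ≥ (1/Q)·|q₀|^{n/(n−1)}. -/

import Mathlib

open Matrix

private lemma conj_entry {k l : Type*} [Fintype k] [Fintype l]
    (G : Matrix k l ℝ) (A : Matrix k k ℝ) (a b : l) :
    (Gᵀ * A * G) a b = (fun i => G i a) ⬝ᵥ (A *ᵥ fun i => G i b) := by
  simp only [Matrix.mul_apply, Matrix.transpose_apply, dotProduct, Matrix.mulVec,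
    Finset.sum_mul, Finset.mul_sum]
  rw [Finset.sum_comm]
  exact Finset.sum_congr rfl fun i _ => Finset.sum_congr rfl fun j _ => by ring

private lemma dot_self_pos {k : Type*} [Fintype k] {v : k → ℝ} (h : v ≠ 0) : 0 < v ⬝ᵥ v := by
  have h0 : 0 ≤ v ⬝ᵥ v := Finset.sum_nonneg fun i _ => mul_self_nonneg _
  rcases h0.lt_or_eq with h' | h'
  · exact h'
  · exact absurd (dotProduct_self_eq_zero.mp h'.symm) h

/-- Lemma (volume of ellipsoids and hyperplanes), second inequality.
`q` is a positive definite quadratic form on `ℝⁿ` (`n ≥ 2`), represented by the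
positive definite symmetric matrix `A` (so `q(u) = u ⬝ᵥ A *ᵥ u`), which is at most
`Q`-distorted: its largest eigenvalue `σ₂` (the least constant with
`q(u,u) ≤ σ₂·⟨u,u⟩`) satisfies `σ₂ ≤ Q·σ₁` where `σ₁` is its smallest eigenvalue
(the greatest constant with `σ₁·⟨u,u⟩ ≤ q(u,u)`).  The hyperplane `H` is
represented as the range of a linear map `f : ℝ^{n-1} → ℝⁿ` preserving the inner
product, and the matrix of the restriction `q₀` of `q` to `H` in the orthonormal
basis `(f eᵢ)` has entries `f eᵢ ⬝ᵥ A *ᵥ f eⱼ`.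
Then `|q| ≥ (1/Q) · |q₀|^{n/(n-1)}`. -/
theorem det_ge_inv_Q_mul_det_restrict_rpow
    (n : ℕ) (hn : 2 ≤ n)
    (A : Matrix (Fin n) (Fin n) ℝ) (hA : A.PosDef)
    (Q σ₁ σ₂ : ℝ) (hQ : 1 ≤ Q)
    (hσ₁ : IsGreatest {c : ℝ | ∀ u : Fin n → ℝ, c * (u ⬝ᵥ u) ≤ u ⬝ᵥ (A *ᵥ u)} σ₁)
    (hσ₂ : IsLeast {c : ℝ | ∀ u : Fin n → ℝ, u ⬝ᵥ (A *ᵥ u) ≤ c * (u ⬝ᵥ u)} σ₂)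
    (hdist : σ₂ ≤ Q * σ₁)
    (f : (Fin (n - 1) → ℝ) →ₗ[ℝ] (Fin n → ℝ))
    (hf : ∀ x y : Fin (n - 1) → ℝ, (f x) ⬝ᵥ (f y) = x ⬝ᵥ y) :
    A.det ≥
      (1 / Q) * (Matrix.of (fun i j : Fin (n - 1) =>
        (f (Pi.single i 1)) ⬝ᵥ (A *ᵥ f (Pi.single j 1)))).det ^ ((n : ℝ) / ((n : ℝ) - 1)) := by
  classical
  set B : Matrix (Fin (n - 1)) (Fin (n - 1)) ℝ := Matrix.of (fun i j : Fin (n - 1) =>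
        (f (Pi.single i 1)) ⬝ᵥ (A *ᵥ f (Pi.single j 1))) with hBdef
  have hQ0 : (0:ℝ) < Q := lt_of_lt_of_le one_pos hQ
  -- A is symmetric; swap lemma
  have hAsymm : Aᵀ = A := hA.1
  have hswap : ∀ u w : Fin n → ℝ, u ⬝ᵥ (A *ᵥ w) = w ⬝ᵥ (A *ᵥ u) := by
    intro u w
    rw [dotProduct_mulVec, ← Matrix.mulVec_transpose, hAsymm, dotProduct_comm]
  -- the matrix of f
  set F : Matrix (Fin n) (Fin (n - 1)) ℝ := Matrix.of (fun i j => f (Pi.single j 1) i) with hFdef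
  have hF : ∀ x : Fin (n - 1) → ℝ, F *ᵥ x = f x := by
    intro x
    have hx : x = ∑ j, x j • (Pi.single j 1 : Fin (n-1) → ℝ) := by
      funext k
      simp [Finset.sum_apply, Pi.single_apply, eq_comm]
    funext k
    conv_rhs => rw [hx]
    simp only [map_sum, _root_.map_smul, Finset.sum_apply, Pi.smul_apply, smul_eq_mul]
    simp only [Matrix.mulVec, dotProduct, hFdef, Matrix.of_apply]
    exact Finset.sum_congr rfl fun j _ => by ring
  have hBF : B = Fᵀ * A * F := by
    ext i j
    rw [conj_entry]
    rfl
  have master : ∀ x y : Fin (n - 1) → ℝ, x ⬝ᵥ (B *ᵥ y) = (f x) ⬝ᵥ (A *ᵥ (f y)) := by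
    intro x y
    rw [← hF x, ← hF y, hBF, ← Matrix.mulVec_mulVec, ← Matrix.mulVec_mulVec,
      dotProduct_mulVec x Fᵀ, vecMul_transpose]
  -- B is positive definite
  have hBsymm : Bᵀ = B := by
    ext i j
    simp only [transpose_apply, hBdef, Matrix.of_apply]
    exact hswap _ _
  have hBpd : B.PosDef := by
    rw [Matrix.posDef_iff_dotProduct_mulVec]
    constructor
    · rw [Matrix.IsHermitian, conjTranspose_eq_transpose_of_trivial]
      exact hBsymm
    · intro x hx
      have hfx0 : f x ≠ 0 := by
        intro h0
        apply hx
        have := hf x x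
        rw [h0] at this
        simp only [zero_dotProduct] at this
        exact dotProduct_self_eq_zero.mp this.symm
      have := hA.dotProduct_mulVec_pos hfx0
      simp only [star_trivial] at this ⊢
      rw [master x x]
      exact this
  have hBdetpos : 0 < B.det := hBpd.det_pos
  haveI : Invertible B := B.invertibleOfIsUnitDet (isUnit_iff_ne_zero.2 hBdetpos.ne')
  -- σ₂ and σ₁ are positive
  have hσ₂pos : 0 < σ₂ := by
    set i0 : Fin n := ⟨0, by omega⟩
    have hu : (Pi.single i0 1 : Fin n → ℝ) ≠ 0 := by
      intro h
      have := congrFun h i0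
      simp at this
    have h1 := hA.dotProduct_mulVec_pos hu
    have h2 := hσ₂.1 (Pi.single i0 1)
    have h3 : (Pi.single i0 1 : Fin n → ℝ) ⬝ᵥ Pi.single i0 1 = 1 := by
      simp [dotProduct, Pi.single_apply]
    rw [h3, mul_one] at h2
    simp only [star_trivial] at h1
    exact lt_of_lt_of_le h1 h2
  have hσ₁pos : 0 < σ₁ := by nlinarith
  -- find the unit normal vector v
  obtain ⟨v, hvnz, hv⟩ : ∃ v : Fin n → ℝ, v ≠ 0 ∧ ∀ j, f (Pi.single j 1) ⬝ᵥ v = 0 := by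
    have hninj : ¬ Function.Injective (Matrix.mulVecLin Fᵀ) := by
      intro hinj
      have h1 := LinearMap.finrank_le_finrank_of_injective hinj
      simp only [Module.finrank_fintype_fun_eq_card, Fintype.card_fin] at h1
      omega
    obtain ⟨x, y, hxy, hne⟩ := Function.not_injective_iff.mp hninj
    refine ⟨x - y, sub_ne_zero.mpr hne, ?_⟩
    intro j
    have h0 : Matrix.mulVecLin Fᵀ (x - y) = 0 := by rw [map_sub, hxy, sub_self]
    have hj := congrFun (congrArg (fun z => z) h0) j
    simp only [Matrix.mulVecLin_apply, Matrix.mulVec, Matrix.transpose_apply, dotProduct,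
      Pi.zero_apply, hFdef, Matrix.of_apply] at hj ⊢
    rw [← hj]
  set c : ℝ := v ⬝ᵥ v with hc
  have hcpos : 0 < c := dot_self_pos hvnz
  set v₁ : Fin n → ℝ := (Real.sqrt c)⁻¹ • v with hv₁def
  have hv₁ : ∀ j, f (Pi.single j 1) ⬝ᵥ v₁ = 0 := by
    intro j
    rw [hv₁def, dotProduct_smul, hv j, smul_zero]
  have hv₁unit : v₁ ⬝ᵥ v₁ = 1 := by
    rw [hv₁def, dotProduct_smul, smul_dotProduct, ← hc, smul_eq_mul, smul_eq_mul]
    have hs : Real.sqrt c ≠ 0 := by positivity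
    field_simp
    exact (Real.sq_sqrt hcpos.le).symm
  -- orthogonality of f x and v₁
  have hv₁F : v₁ ᵥ* F = 0 := by
    funext j
    have := hv₁ j
    simp only [Matrix.vecMul, dotProduct, hFdef, Matrix.of_apply, transpose_apply,
      Pi.zero_apply] at this ⊢
    rw [← this]
    exact Finset.sum_congr rfl fun i _ => by ring
  have hv₁f : ∀ x : Fin (n-1) → ℝ, (f x) ⬝ᵥ v₁ = 0 := by
    intro x
    rw [← hF x, dotProduct_comm, dotProduct_mulVec, hv₁F, zero_dotProduct]
  -- the big matrix G with orthonormal columns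
  set G : Matrix (Fin n) (Fin (n - 1) ⊕ Unit) ℝ :=
    Matrix.of (fun i j => Sum.elim (fun k => f (Pi.single k 1) i) (fun _ => v₁ i) j) with hGdef
  set M : Matrix (Fin (n - 1) ⊕ Unit) (Fin (n - 1) ⊕ Unit) ℝ := Gᵀ * A * G with hMdef
  have hcard : Fintype.card (Fin (n - 1) ⊕ Unit) = Fintype.card (Fin n) := by
    simp only [Fintype.card_sum, Fintype.card_fin, Fintype.card_unit]
    omega
  obtain e : (Fin (n - 1) ⊕ Unit) ≃ (Fin n) := Fintype.equivOfCardEq hcard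
  have hcolorth : ∀ a b : Fin (n - 1) ⊕ Unit,
      (fun i => G i a) ⬝ᵥ (fun i => G i b) = if a = b then 1 else 0 := by
    rintro (a | a) (b | b)
    · simp only [hGdef, Matrix.of_apply, Sum.elim_inl]
      rw [show (fun i => f (Pi.single a 1) i) = f (Pi.single a 1) from rfl,
        show (fun i => f (Pi.single b 1) i) = f (Pi.single b 1) from rfl, hf]
      simp [dotProduct, Pi.single_apply, eq_comm]
    · simpa [hGdef] using hv₁ a
    · simp only [hGdef, Matrix.of_apply, Sum.elim_inl, Sum.elim_inr]
      rw [show (fun i => v₁ i) = v₁ from rfl, dotProduct_comm]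
      simpa using hv₁ b
    · simpa [hGdef] using hv₁unit
  have hdetM : M.det = A.det := by
    set G' : Matrix (Fin n) (Fin n) ℝ := G.submatrix id ⇑e.symm with hG'def
    have hG'orth : G'ᵀ * G' = 1 := by
      ext a b
      have h1 : (G'ᵀ * G') a b = (fun i => G i (e.symm a)) ⬝ᵥ (fun i => G i (e.symm b)) := by
        simp [Matrix.mul_apply, dotProduct, hG'def]
      rw [h1, hcolorth]
      simp [Matrix.one_apply, EmbeddingLike.apply_eq_iff_eq]
    have hdetG' : G'.det * G'.det = 1 := by
      have h2 := congrArg Matrix.det hG'orth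
      rwa [Matrix.det_mul, Matrix.det_transpose, Matrix.det_one] at h2
    have h1 : G'ᵀ * A * G' = M.submatrix ⇑e.symm ⇑e.symm := by
      ext a b
      rw [Matrix.submatrix_apply, hMdef, conj_entry, conj_entry]
      rfl
    calc M.det = (M.submatrix ⇑e.symm ⇑e.symm).det :=
          (Matrix.det_submatrix_equiv_self e.symm M).symm
      _ = (G'ᵀ * A * G').det := by rw [h1]
      _ = G'.det * A.det * G'.det := by
          rw [Matrix.det_mul, Matrix.det_mul, Matrix.det_transpose]
      _ = A.det := by rw [mul_comm G'.det A.det, mul_assoc, hdetG', mul_one]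
  -- block decomposition
  set w : Fin (n - 1) → ℝ := fun j => f (Pi.single j 1) ⬝ᵥ (A *ᵥ v₁) with hwdef
  have hMblocks : M = Matrix.fromBlocks B (Matrix.of fun i (_ : Unit) => w i)
      (Matrix.of fun (_ : Unit) j => w j)
      (Matrix.of fun (_ : Unit) (_ : Unit) => v₁ ⬝ᵥ (A *ᵥ v₁)) := by
    ext a b
    rcases a with a | a <;> rcases b with b | b <;>
      rw [hMdef, conj_entry]
    · show (f (Pi.single a 1)) ⬝ᵥ (A *ᵥ f (Pi.single b 1)) = B a b
      rfl
    · show (f (Pi.single a 1)) ⬝ᵥ (A *ᵥ v₁) = w a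
      rfl
    · show v₁ ⬝ᵥ (A *ᵥ f (Pi.single b 1)) = w b
      rw [hwdef]
      exact hswap _ _
    · rfl
  -- Schur complement: A.det = B.det * s
  set s : ℝ := v₁ ⬝ᵥ (A *ᵥ v₁) - w ⬝ᵥ (B⁻¹ *ᵥ w) with hsdef
  have hdet_schur : A.det = B.det * s := by
    rw [← hdetM, hMblocks, Matrix.det_fromBlocks₁₁]
    congr 1
    rw [Matrix.det_unique]
    simp only [Matrix.sub_apply, Matrix.of_apply, Matrix.invOf_eq_nonsing_inv]
    congr 1
    simp only [Matrix.mul_apply, Matrix.of_apply, dotProduct, Matrix.mulVec,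
      Finset.sum_mul, Finset.mul_sum]
    rw [Finset.sum_comm]
    exact Finset.sum_congr rfl fun i _ => Finset.sum_congr rfl fun j _ => by ring
  -- s is at least σ₁
  have hs_ge : σ₁ ≤ s := by
    set x₀ : Fin (n-1) → ℝ := B⁻¹ *ᵥ w with hx₀def
    set y : Fin n → ℝ := v₁ - f x₀ with hydef
    have hBx₀ : B *ᵥ x₀ = w := by
      rw [hx₀def, Matrix.mulVec_mulVec, Matrix.mul_nonsing_inv _ (isUnit_iff_ne_zero.2
        hBdetpos.ne'), Matrix.one_mulVec]
    have hfx₀Av : (f x₀) ⬝ᵥ (A *ᵥ v₁) = x₀ ⬝ᵥ w := by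
      rw [← hF x₀, dotProduct_comm, dotProduct_mulVec]
      have hvF : (A *ᵥ v₁) ᵥ* F = w := by
        funext j
        simp only [Matrix.vecMul, dotProduct, hFdef, Matrix.of_apply, hwdef]
        exact Finset.sum_congr rfl fun i _ => by ring
      rw [hvF, dotProduct_comm]
    have hfx₀Afx₀ : (f x₀) ⬝ᵥ (A *ᵥ f x₀) = x₀ ⬝ᵥ w := by
      rw [← master, hBx₀]
    have hyAy : y ⬝ᵥ (A *ᵥ y) = s := by
      rw [hydef, Matrix.mulVec_sub, sub_dotProduct, dotProduct_sub, dotProduct_sub]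
      rw [hfx₀Av, hfx₀Afx₀]
      have h5 : v₁ ⬝ᵥ (A *ᵥ f x₀) = x₀ ⬝ᵥ w := by rw [hswap]; exact hfx₀Av
      rw [h5, hsdef]
      have h6 : w ⬝ᵥ (B⁻¹ *ᵥ w) = x₀ ⬝ᵥ w := by rw [← hx₀def, dotProduct_comm]
      rw [h6]
      ring
    have hyy : 1 ≤ y ⬝ᵥ y := by
      rw [hydef, sub_dotProduct, dotProduct_sub, dotProduct_sub]
      rw [hv₁unit, hv₁f x₀, hf x₀ x₀]
      have h7 : v₁ ⬝ᵥ (f x₀) = 0 := by rw [dotProduct_comm]; exact hv₁f x₀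
      rw [h7]
      have h8 : 0 ≤ x₀ ⬝ᵥ x₀ := Finset.sum_nonneg fun i _ => mul_self_nonneg _
      linarith
    have h9 := hσ₁.1 y
    calc σ₁ = σ₁ * 1 := (mul_one σ₁).symm
      _ ≤ σ₁ * (y ⬝ᵥ y) := mul_le_mul_of_nonneg_left hyy hσ₁pos.le
      _ ≤ y ⬝ᵥ (A *ᵥ y) := h9
      _ = s := hyAy
  -- eigenvalue bound for det B
  have hBbound : B.det ≤ σ₂ ^ (n - 1) := by
    have hBh : B.IsHermitian := hBpd.1
    have heig : ∀ i, hBh.eigenvalues i ≤ σ₂ := by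
      intro i
      set u : Fin (n-1) → ℝ := ⇑(hBh.eigenvectorBasis i) with hudef
      have hBu : B *ᵥ u = hBh.eigenvalues i • u := hBh.mulVec_eigenvectorBasis i
      have huu : u ⬝ᵥ u = 1 := by
        have hnorm : ‖hBh.eigenvectorBasis i‖ = 1 := hBh.eigenvectorBasis.orthonormal.1 i
        have : u ⬝ᵥ u = @inner ℝ _ _ (hBh.eigenvectorBasis i) (hBh.eigenvectorBasis i) := by
          rw [EuclideanSpace.inner_eq_star_dotProduct, star_trivial]
        rw [this, real_inner_self_eq_norm_sq, hnorm, one_pow]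
      have h1 : u ⬝ᵥ (B *ᵥ u) = hBh.eigenvalues i := by
        rw [hBu, dotProduct_smul, huu, smul_eq_mul, mul_one]
      have h2 := hσ₂.1 (f u)
      rw [hf u u, huu, mul_one, ← master u u, h1] at h2
      exact h2
    have heigpos : ∀ i, 0 < hBh.eigenvalues i := fun i => hBpd.eigenvalues_pos i
    have hdet : B.det = ∏ i, hBh.eigenvalues i := by
      rw [hBh.det_eq_prod_eigenvalues]
      norm_num
    rw [hdet]
    calc ∏ i, hBh.eigenvalues i ≤ ∏ _i : Fin (n-1), σ₂ :=
          Finset.prod_le_prod (fun i _ => (heigpos i).le) (fun i _ => heig i)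
      _ = σ₂ ^ (n - 1) := by rw [Finset.prod_const, Finset.card_univ, Fintype.card_fin]
  -- final computation
  have hcast : ((n - 1 : ℕ) : ℝ) = (n : ℝ) - 1 := by
    have h1 : (1:ℕ) ≤ n := by omega
    push_cast [Nat.cast_sub h1]
    ring
  have hr0 : (0:ℝ) < (n : ℝ) - 1 := by
    have h2 : (2:ℝ) ≤ (n:ℝ) := by exact_mod_cast hn
    linarith
  have hdp : B.det ^ ((n : ℝ) / ((n : ℝ) - 1)) = B.det * B.det ^ ((n:ℝ) - 1)⁻¹ := by
    have hexp : (n : ℝ) / ((n : ℝ) - 1) = 1 + ((n:ℝ) - 1)⁻¹ := by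
      field_simp
      ring
    rw [hexp, Real.rpow_add hBdetpos, Real.rpow_one]
  have hdroot : B.det ^ ((n:ℝ) - 1)⁻¹ ≤ σ₂ := by
    have h1 := Real.rpow_le_rpow hBdetpos.le hBbound (inv_nonneg.mpr hr0.le)
    rwa [← Real.rpow_natCast σ₂ (n-1), hcast, ← Real.rpow_mul hσ₂pos.le,
      mul_inv_cancel₀ hr0.ne', Real.rpow_one] at h1
  rw [ge_iff_le]
  calc (1/Q) * B.det ^ ((n : ℝ) / ((n : ℝ) - 1))
      = (1/Q) * (B.det * B.det ^ ((n:ℝ) - 1)⁻¹) := by rw [hdp]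
    _ ≤ (1/Q) * (B.det * σ₂) := by
        apply mul_le_mul_of_nonneg_left _ (by positivity)
        exact mul_le_mul_of_nonneg_left hdroot hBdetpos.le
    _ = B.det * (σ₂ / Q) := by ring
    _ ≤ B.det * σ₁ := by
        apply mul_le_mul_of_nonneg_left _ hBdetpos.le
        rw [div_le_iff₀ hQ0]
        linarith
    _ ≤ B.det * s := mul_le_mul_of_nonneg_left hs_ge hBdetpos.le
    _ = A.det := hdet_schur.symm
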